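/- Under the hypotheses of the general estimate but with arbitrary mean g₀, if c²(Var(f) + Var(h)) − g₀² ≥ 0 (and > 0), then S^g_{T,x_i} ≤ 2L²Var(f)·S^f_{T,x_i} / (c²(Var(f)+Var(h)) − g₀²). -/

import Mathlib

open MeasureTheory

noncomputable section SobolDefs

/-- Uniform probability measure on the open unit cube `(0,1)^n`. -/
def uCube (n : ℕ) : Measure (Fin n → ℝ) :=
  Measure.pi fun _ => volume.restrict (Set.Ioo 0 1)

/-- Mean value of `f`. -/
def mval {α : Type*} [MeasurableSpace α] (μ : Measure α) (f : α → ℝ) : ℝ := ∫ x, f x ∂μ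

/-- Integral of the square of `f`. -/
def intSq {α : Type*} [MeasurableSpace α] (μ : Measure α) (f : α → ℝ) : ℝ := ∫ x, (f x) ^ 2 ∂μ

/-- Variance of `f`. -/
def var' {α : Type*} [MeasurableSpace α] (μ : Measure α) (f : α → ℝ) : ℝ := intSq μ f - (mval μ f) ^ 2

/-- Covariance of `f` and `h`. -/
def cov' {α : Type*} [MeasurableSpace α] (μ : Measure α) (f h : α → ℝ) : ℝ :=
  (∫ x, f x * h x ∂μ) - mval μ f * mval μ h

/-- Conditional mean of `f` obtained by integrating out the coordinate encoded
by the update map `upd` over `(0,1)`. -/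
def cMean {α : Type*} [MeasurableSpace α] (upd : α → ℝ → α) (f : α → ℝ) (x : α) : ℝ :=
  ∫ t in Set.Ioo (0 : ℝ) 1, f (upd x t)

/-- Total-effect variance of the coordinate encoded by `upd`. -/
def tVar {α : Type*} [MeasurableSpace α] (μ : Measure α) (upd : α → ℝ → α) (f : α → ℝ) : ℝ :=
  intSq μ f - ∫ x, (cMean upd f x) ^ 2 ∂μ

/-- Total Sobol sensitivity index of the coordinate encoded by `upd`. -/
def sobolT {α : Type*} [MeasurableSpace α] (μ : Measure α) (upd : α → ℝ → α) (f : α → ℝ) : ℝ :=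
  tVar μ upd f / var' μ f

/-- Updating the `i`-th coordinate of a point of the cube. -/
def updC {n : ℕ} (i : Fin n) : (Fin n → ℝ) → ℝ → (Fin n → ℝ) :=
  fun x t => Function.update x i t

/-- Updating the `i`-th coordinate of the first component of a product point. -/
def updF {n : ℕ} {β : Type*} (i : Fin n) : ((Fin n → ℝ) × β) → ℝ → ((Fin n → ℝ) × β) :=
  fun p t => (Function.update p.1 i t, p.2)

end SobolDefs

noncomputable section SobolAux

open MeasureTheory Set

local notation "ν01" => (MeasureTheory.volume.restrict (Set.Ioo (0:ℝ) 1))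

instance : IsProbabilityMeasure ν01 :=
  ⟨by rw [Measure.restrict_apply_univ]; simp⟩

instance uCube.instIsProbabilityMeasure (n : ℕ) : IsProbabilityMeasure (uCube n) := by
  unfold uCube; infer_instance

section helpers

variable {α β : Type*} [MeasurableSpace α] [MeasurableSpace β]

lemma integral_comp_mp {μ : Measure α} {ν' : Measure β} {T : α → β}
    (hT : MeasurePreserving T μ ν') {F : β → ℝ} (hF : AEStronglyMeasurable F ν') :
    ∫ x, F (T x) ∂μ = ∫ y, F y ∂ν' := by
  rw [← hT.map_eq] at hF
  rw [← integral_map hT.measurable.aemeasurable hF, hT.map_eq]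

lemma integrable_comp_mp {μ : Measure α} {ν' : Measure β} {T : α → β}
    (hT : MeasurePreserving T μ ν') {F : β → ℝ} (hF : Integrable F ν') :
    Integrable (fun x => F (T x)) μ := by
  have h := hF; rw [← hT.map_eq] at h
  exact h.comp_aemeasurable hT.measurable.aemeasurable

lemma int_sub_const_sq {μ : Measure α} [IsProbabilityMeasure μ] {X : α → ℝ}
    (h1 : Integrable X μ) (h2 : Integrable (fun x => X x ^ 2) μ) (a : ℝ) :
    ∫ x, (X x - a) ^ 2 ∂μ
      = (∫ x, X x ^ 2 ∂μ) - 2 * a * (∫ x, X x ∂μ) + a ^ 2 := by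
  have hpt : ∀ x, (X x - a) ^ 2 = X x ^ 2 - 2 * a * X x + a ^ 2 := fun x => by ring
  simp_rw [hpt]
  have hsub : Integrable (fun x => X x ^ 2 - 2 * a * X x) μ := h2.sub (h1.const_mul (2 * a))
  rw [integral_add hsub (integrable_const _),
    integral_sub h2 (h1.const_mul (2 * a)), integral_const_mul, integral_const]
  simp

lemma integrable_sub_const_sq {μ : Measure α} [IsFiniteMeasure μ] {X : α → ℝ}
    (h1 : Integrable X μ) (h2 : Integrable (fun x => X x ^ 2) μ) (a : ℝ) :
    Integrable (fun x => (X x - a) ^ 2) μ := by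
  have hpt : (fun x => (X x - a) ^ 2) = fun x => X x ^ 2 - 2 * a * X x + a ^ 2 :=
    funext fun x => by ring
  rw [hpt]
  exact (h2.sub (h1.const_mul (2 * a))).add (integrable_const _)

lemma sq_int_le {μ : Measure α} [IsProbabilityMeasure μ] {X : α → ℝ}
    (h1 : Integrable X μ) (h2 : Integrable (fun x => X x ^ 2) μ) :
    (∫ x, X x ∂μ) ^ 2 ≤ ∫ x, X x ^ 2 ∂μ := by
  have h0 : 0 ≤ ∫ x, (X x - ∫ y, X y ∂μ) ^ 2 ∂μ := integral_nonneg fun x => sq_nonneg _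
  rw [int_sub_const_sq h1 h2] at h0
  nlinarith [h0]

lemma var_le_int_sub_sq {μ : Measure α} [IsProbabilityMeasure μ] {X : α → ℝ}
    (h1 : Integrable X μ) (h2 : Integrable (fun x => X x ^ 2) μ) (a : ℝ) :
    (∫ x, X x ^ 2 ∂μ) - (∫ x, X x ∂μ) ^ 2 ≤ ∫ x, (X x - a) ^ 2 ∂μ := by
  rw [int_sub_const_sq h1 h2]
  nlinarith [sq_nonneg ((∫ x, X x ∂μ) - a)]

/-- Bundle of integrability facts for a square-integrable function and a
measure-preserving update map. -/
lemma mp_bundle {μ : Measure α} [IsProbabilityMeasure μ] {upd : α → ℝ → α}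
    (hMP : MeasurePreserving (fun q : α × ℝ => upd q.1 q.2) (μ.prod ν01) μ)
    {F : α → ℝ} (hF : MemLp F 2 μ) :
    Integrable (fun x => ∫ t in Set.Ioo (0:ℝ) 1, (F (upd x t)) ^ 2) μ ∧
    (∫ x, (∫ t in Set.Ioo (0:ℝ) 1, (F (upd x t)) ^ 2) ∂μ) = intSq μ F ∧
    Integrable (fun x => (cMean upd F x) ^ 2) μ ∧
    (∀ᵐ x ∂μ, Integrable (fun t : ℝ => F (upd x t)) ν01 ∧
      Integrable (fun t : ℝ => (F (upd x t)) ^ 2) ν01) := by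
  have hFT : MemLp (fun q : α × ℝ => F (upd q.1 q.2)) 2 (μ.prod ν01) :=
    hF.comp_measurePreserving hMP
  have hFTi : Integrable (fun q : α × ℝ => F (upd q.1 q.2)) (μ.prod ν01) :=
    hFT.integrable one_le_two
  have hFT2 : Integrable (fun q : α × ℝ => (F (upd q.1 q.2)) ^ 2) (μ.prod ν01) :=
    hFT.integrable_sq
  have hI1 : Integrable (fun x => ∫ t in Set.Ioo (0:ℝ) 1, (F (upd x t)) ^ 2) μ :=
    hFT2.integral_prod_left
  have hasm2 : AEStronglyMeasurable (fun y => F y ^ 2) μ := by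
    exact hF.aestronglyMeasurable.pow 2
  have hEq : (∫ x, (∫ t in Set.Ioo (0:ℝ) 1, (F (upd x t)) ^ 2) ∂μ) = intSq μ F := by
    rw [← integral_prod _ hFT2]
    exact integral_comp_mp hMP hasm2
  have haeslice : ∀ᵐ x ∂μ, Integrable (fun t : ℝ => F (upd x t)) ν01 ∧
      Integrable (fun t : ℝ => (F (upd x t)) ^ 2) ν01 :=
    (hFTi.prod_right_ae).and (hFT2.prod_right_ae)
  have hJensen : ∀ᵐ x ∂μ,
      (cMean upd F x) ^ 2 ≤ ∫ t in Set.Ioo (0:ℝ) 1, (F (upd x t)) ^ 2 := by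
    filter_upwards [haeslice] with x hx
    exact sq_int_le hx.1 hx.2
  have hcm_asm : AEStronglyMeasurable (cMean upd F) μ :=
    hFTi.aestronglyMeasurable.integral_prod_right'
  have hcm2 : Integrable (fun x => (cMean upd F x) ^ 2) μ := by
    refine Integrable.mono' hI1 (hcm_asm.pow 2) ?_
    filter_upwards [hJensen] with x hx
    rw [Real.norm_eq_abs, abs_of_nonneg (sq_nonneg _)]
    exact hx
  exact ⟨hI1, hEq, hcm2, haeslice⟩

lemma tVar_nonneg_of_mp {μ : Measure α} [IsProbabilityMeasure μ] {upd : α → ℝ → α}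
    (hMP : MeasurePreserving (fun q : α × ℝ => upd q.1 q.2) (μ.prod ν01) μ)
    {F : α → ℝ} (hF : MemLp F 2 μ) : 0 ≤ tVar μ upd F := by
  obtain ⟨hI1, hEq, hcm2, hae⟩ := mp_bundle hMP hF
  have hJ : ∀ᵐ x ∂μ, (cMean upd F x) ^ 2 ≤ ∫ t in Set.Ioo (0:ℝ) 1, (F (upd x t)) ^ 2 := by
    filter_upwards [hae] with x hx; exact sq_int_le hx.1 hx.2
  have := integral_mono_ae hcm2 hI1 hJ
  rw [hEq] at this
  unfold tVar
  linarith

end helpers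

lemma mp_fst {α β : Type*} [MeasurableSpace α] [MeasurableSpace β]
    (μ : Measure α) (ν' : Measure β) [SFinite ν'] [IsProbabilityMeasure ν'] :
    MeasurePreserving (Prod.fst : α × β → α) (μ.prod ν') μ :=
  ⟨measurable_fst, by
    rw [show Measure.map Prod.fst (μ.prod ν') = (μ.prod ν').fst from rfl, Measure.fst_prod]⟩

lemma mp_updC {n : ℕ} (i : Fin n) :
    MeasurePreserving (fun q : (Fin n → ℝ) × ℝ => updC i q.1 q.2)
      ((uCube n).prod ν01) (uCube n) := by
  have hmeas : Measurable (fun q : (Fin n → ℝ) × ℝ => updC i q.1 q.2) := by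
    unfold updC; exact measurable_update'
  refine ⟨hmeas, ?_⟩
  refine (Measure.pi_eq fun s hs => ?_).symm
  rw [Measure.map_apply hmeas (MeasurableSet.univ_pi hs)]
  have hpre : (fun q : (Fin n → ℝ) × ℝ => updC i q.1 q.2) ⁻¹' (Set.pi Set.univ s)
      = (Set.pi Set.univ (Function.update s i Set.univ)) ×ˢ (s i) := by
    ext ⟨x, t⟩
    simp only [Set.mem_preimage, Set.mem_pi, Set.mem_univ, forall_true_left, Set.mem_prod, updC]
    constructor
    · intro hq
      refine ⟨fun j => ?_, by simpa using hq i⟩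
      rcases eq_or_ne j i with rfl | hj
      · simp
      · simpa [Function.update_of_ne hj] using hq j
    · rintro ⟨h1, h2⟩ j
      rcases eq_or_ne j i with rfl | hj
      · simpa using h2
      · simpa [Function.update_of_ne hj] using h1 j
  rw [hpre, Measure.prod_prod]
  rw [show uCube n = Measure.pi fun _ => ν01 from rfl, Measure.pi_pi]
  calc (∏ j, ν01 (Function.update s i Set.univ j)) * ν01 (s i)
      = (∏ j, Function.update (fun j => ν01 (s j)) i 1 j) * ν01 (s i) := by
        congr 1
        refine Finset.prod_congr rfl fun j _ => ?_
        rcases eq_or_ne j i with rfl | hj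
        · simp
        · simp [Function.update_of_ne hj]
    _ = (∏ j ∈ Finset.univ.erase i, ν01 (s j)) * ν01 (s i) := by
        rw [Finset.prod_update_of_mem (Finset.mem_univ i), one_mul, ← Finset.erase_eq]
    _ = ∏ j, ν01 (s j) := by
        rw [mul_comm, Finset.mul_prod_erase Finset.univ (fun j => ν01 (s j)) (Finset.mem_univ i)]

lemma mp_updF {n m : ℕ} (i : Fin n) :
    MeasurePreserving (fun q : ((Fin n → ℝ) × (Fin m → ℝ)) × ℝ => updF i q.1 q.2)
      (((uCube n).prod (uCube m)).prod ν01) ((uCube n).prod (uCube m)) := by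
  have h1 := measurePreserving_prodAssoc (uCube n) (uCube m) ν01
  have h2 := (MeasurePreserving.id (uCube n)).prod
    (Measure.measurePreserving_swap (μ := uCube m) (ν := ν01))
  have h3 := MeasurePreserving.symm MeasurableEquiv.prodAssoc
    (measurePreserving_prodAssoc (uCube n) ν01 (uCube m))
  have h4 := (mp_updC i).prod (MeasurePreserving.id (uCube m))
  have hcomp := (h4.comp (h3.comp (h2.comp h1)))
  have hfun : ((Prod.map (fun r : (Fin n → ℝ) × ℝ => updC i r.1 r.2) id)
        ∘ ((MeasurableEquiv.prodAssoc :
            ((Fin n → ℝ) × ℝ) × (Fin m → ℝ) ≃ᵐ (Fin n → ℝ) × ℝ × (Fin m → ℝ)).symm)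
        ∘ (Prod.map (id : (Fin n → ℝ) → (Fin n → ℝ)) (Prod.swap))
        ∘ (MeasurableEquiv.prodAssoc :
            ((Fin n → ℝ) × (Fin m → ℝ)) × ℝ ≃ᵐ (Fin n → ℝ) × (Fin m → ℝ) × ℝ))
      = (fun q : ((Fin n → ℝ) × (Fin m → ℝ)) × ℝ => updF i q.1 q.2) := by
    funext q; rfl
  rw [← hfun]
  exact hcomp

/-- General estimate with arbitrary mean (Corollary D2): if
`c²(Var f + Var h) − g₀² > 0` then
`S^g_{T,x_i} ≤ 2L²·Var f·S^f_{T,x_i} / (c²(Var f + Var h) − g₀²)`. -/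
theorem stmt12 {n m : ℕ} (i : Fin n) (G : ℝ → ℝ → ℝ) (L c : ℝ)
    (hc : 0 < c) (hLc : c ≤ L)
    (hLip : ∀ u u₀ v : ℝ, |G u v - G u₀ v| ≤ L * |u - u₀|)
    (hcoer : ∀ u v : ℝ, c * Real.sqrt (u ^ 2 + v ^ 2) ≤ |G u v|)
    (f : (Fin n → ℝ) → ℝ) (h : (Fin n → ℝ) × (Fin m → ℝ) → ℝ)
    (hf : MemLp f 2 (uCube n)) (hh : MemLp h 2 ((uCube n).prod (uCube m)))
    (hind : ∀ (x : Fin n → ℝ) (t : ℝ) (ξ : Fin m → ℝ),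
      h (Function.update x i t, ξ) = h (x, ξ))
    (hg : MemLp (fun p : (Fin n → ℝ) × (Fin m → ℝ) => G (f p.1) (h p)) 2
      ((uCube n).prod (uCube m)))
    (hvf : 0 < var' (uCube n) f)
    (hvh : 0 < var' ((uCube n).prod (uCube m)) h)
    (hpos : 0 < c ^ 2 * (var' (uCube n) f + var' ((uCube n).prod (uCube m)) h) -
      (mval ((uCube n).prod (uCube m)) fun p => G (f p.1) (h p)) ^ 2) :
    sobolT ((uCube n).prod (uCube m)) (updF i) (fun p => G (f p.1) (h p)) ≤
      2 * L ^ 2 * var' (uCube n) f * sobolT (uCube n) (updC i) f /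
        (c ^ 2 * (var' (uCube n) f + var' ((uCube n).prod (uCube m)) h) -
          (mval ((uCube n).prod (uCube m)) fun p => G (f p.1) (h p)) ^ 2) := by
  classical
  set g : (Fin n → ℝ) × (Fin m → ℝ) → ℝ := fun p => G (f p.1) (h p) with hgdef
  have hMPf := mp_updC i
  have hMPg := mp_updF (m := m) i
  have hMPfst := mp_fst (uCube n) (uCube m)
  obtain ⟨hIf1, hEqf, hIcf2, haef⟩ := mp_bundle hMPf hf
  obtain ⟨hIg1, hEqg, hIcg2, haeg⟩ := mp_bundle hMPg hg
  have hL0 : 0 ≤ L := hc.le.trans hLc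
  -- integrable local-variance functions
  have hIVf : Integrable (fun x => (∫ t in Set.Ioo (0:ℝ) 1, (f (updC i x t)) ^ 2)
      - (cMean (updC i) f x) ^ 2) (uCube n) := hIf1.sub hIcf2
  have hIVg : Integrable (fun p => (∫ t in Set.Ioo (0:ℝ) 1, (g (updF i p t)) ^ 2)
      - (cMean (updF i) g p) ^ 2) ((uCube n).prod (uCube m)) := hIg1.sub hIcg2
  have hVfc : Integrable (fun p : (Fin n → ℝ) × (Fin m → ℝ) =>
      (∫ t in Set.Ioo (0:ℝ) 1, (f (updC i p.1 t)) ^ 2)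
      - (cMean (updC i) f p.1) ^ 2) ((uCube n).prod (uCube m)) :=
    integrable_comp_mp hMPfst hIVf
  -- slices of f, lifted to the product space
  have hslice_f : ∀ᵐ p ∂((uCube n).prod (uCube m)),
      Integrable (fun t : ℝ => f (updC i p.1 t)) ν01 ∧
        Integrable (fun t : ℝ => (f (updC i p.1 t)) ^ 2) ν01 :=
    hMPfst.quasiMeasurePreserving.ae haef
  -- pointwise comparison of local variances
  have hb : ∀ᵐ p ∂((uCube n).prod (uCube m)),
      ((∫ t in Set.Ioo (0:ℝ) 1, (g (updF i p t)) ^ 2) - (cMean (updF i) g p) ^ 2)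
        ≤ L ^ 2 * ((∫ t in Set.Ioo (0:ℝ) 1, (f (updC i p.1 t)) ^ 2)
            - (cMean (updC i) f p.1) ^ 2) := by
    filter_upwards [haeg, hslice_f] with p hX hY
    obtain ⟨hX1, hX2⟩ := hX
    obtain ⟨hY1, hY2⟩ := hY
    have hXY : ∀ t : ℝ, g (updF i p t) = G (f (updC i p.1 t)) (h p) := by
      intro t
      rw [hgdef]
      show G (f (Function.update p.1 i t)) (h (Function.update p.1 i t, p.2)) = _
      rw [hind p.1 t p.2]
      rfl
    have c2 : ∀ t : ℝ, (g (updF i p t) - G (cMean (updC i) f p.1) (h p)) ^ 2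
        ≤ L ^ 2 * (f (updC i p.1 t) - cMean (updC i) f p.1) ^ 2 := by
      intro t
      have h7 : |g (updF i p t) - G (cMean (updC i) f p.1) (h p)|
          ≤ L * |f (updC i p.1 t) - cMean (updC i) f p.1| := by
        rw [hXY t]; exact hLip _ _ _
      calc (g (updF i p t) - G (cMean (updC i) f p.1) (h p)) ^ 2
          = |g (updF i p t) - G (cMean (updC i) f p.1) (h p)| ^ 2 := (sq_abs _).symm
        _ ≤ (L * |f (updC i p.1 t) - cMean (updC i) f p.1|) ^ 2 :=
            pow_le_pow_left₀ (abs_nonneg _) h7 2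
        _ = L ^ 2 * (f (updC i p.1 t) - cMean (updC i) f p.1) ^ 2 := by
            rw [mul_pow, sq_abs]
    calc (∫ t in Set.Ioo (0:ℝ) 1, (g (updF i p t)) ^ 2) - (cMean (updF i) g p) ^ 2
        ≤ ∫ t in Set.Ioo (0:ℝ) 1,
            (g (updF i p t) - G (cMean (updC i) f p.1) (h p)) ^ 2 :=
          var_le_int_sub_sq hX1 hX2 _
      _ ≤ ∫ t in Set.Ioo (0:ℝ) 1,
            L ^ 2 * (f (updC i p.1 t) - cMean (updC i) f p.1) ^ 2 :=
          integral_mono (integrable_sub_const_sq hX1 hX2 _)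
            ((integrable_sub_const_sq hY1 hY2 _).const_mul _) c2
      _ = L ^ 2 * ((∫ t in Set.Ioo (0:ℝ) 1, (f (updC i p.1 t)) ^ 2)
            - (cMean (updC i) f p.1) ^ 2) := by
          rw [integral_const_mul, int_sub_const_sq hY1 hY2 _,
            show (∫ t in Set.Ioo (0:ℝ) 1, f (updC i p.1 t)) = cMean (updC i) f p.1 from rfl]
          ring
  -- integrate the pointwise bound
  have hmain := integral_mono_ae hIVg (hVfc.const_mul (L ^ 2)) hb
  have e1 : tVar ((uCube n).prod (uCube m)) (updF i) g
      = ∫ p, ((∫ t in Set.Ioo (0:ℝ) 1, (g (updF i p t)) ^ 2)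
          - (cMean (updF i) g p) ^ 2) ∂((uCube n).prod (uCube m)) := by
    rw [show tVar ((uCube n).prod (uCube m)) (updF i) g
        = intSq ((uCube n).prod (uCube m)) g
          - ∫ p, (cMean (updF i) g p) ^ 2 ∂((uCube n).prod (uCube m)) from rfl,
      ← hEqg, ← integral_sub hIg1 hIcg2]
  have e2 : tVar (uCube n) (updC i) f
      = ∫ x, ((∫ t in Set.Ioo (0:ℝ) 1, (f (updC i x t)) ^ 2)
          - (cMean (updC i) f x) ^ 2) ∂(uCube n) := by
    rw [show tVar (uCube n) (updC i) f
        = intSq (uCube n) f - ∫ x, (cMean (updC i) f x) ^ 2 ∂(uCube n) from rfl,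
      ← hEqf, ← integral_sub hIf1 hIcf2]
  have e3 : (∫ p, L ^ 2 * ((∫ t in Set.Ioo (0:ℝ) 1, (f (updC i p.1 t)) ^ 2)
        - (cMean (updC i) f p.1) ^ 2) ∂((uCube n).prod (uCube m)))
      = L ^ 2 * ∫ x, ((∫ t in Set.Ioo (0:ℝ) 1, (f (updC i x t)) ^ 2)
        - (cMean (updC i) f x) ^ 2) ∂(uCube n) := by
    rw [integral_const_mul]
    congr 1
    exact integral_comp_mp hMPfst hIVf.aestronglyMeasurable
  have htg_le : tVar ((uCube n).prod (uCube m)) (updF i) g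
      ≤ L ^ 2 * tVar (uCube n) (updC i) f := by
    rw [e1, e2]
    calc (∫ p, ((∫ t in Set.Ioo (0:ℝ) 1, (g (updF i p t)) ^ 2)
            - (cMean (updF i) g p) ^ 2) ∂((uCube n).prod (uCube m)))
        ≤ ∫ p, L ^ 2 * ((∫ t in Set.Ioo (0:ℝ) 1, (f (updC i p.1 t)) ^ 2)
            - (cMean (updC i) f p.1) ^ 2) ∂((uCube n).prod (uCube m)) := hmain
      _ = _ := e3
  -- nonnegativity of both total variances
  have htg0 : 0 ≤ tVar ((uCube n).prod (uCube m)) (updF i) g :=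
    tVar_nonneg_of_mp hMPg hg
  have htf0 : 0 ≤ tVar (uCube n) (updC i) f := tVar_nonneg_of_mp hMPf hf
  -- lower bound on the variance of g
  have hfsq_c : Integrable (fun p : (Fin n → ℝ) × (Fin m → ℝ) => (f p.1) ^ 2)
      ((uCube n).prod (uCube m)) := integrable_comp_mp hMPfst hf.integrable_sq
  have hhsq : Integrable (fun p => (h p) ^ 2) ((uCube n).prod (uCube m)) := hh.integrable_sq
  have hgsq : Integrable (fun p => (g p) ^ 2) ((uCube n).prod (uCube m)) := hg.integrable_sq
  have hpt : ∀ p : (Fin n → ℝ) × (Fin m → ℝ),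
      c ^ 2 * ((f p.1) ^ 2 + (h p) ^ 2) ≤ (g p) ^ 2 := by
    intro p
    rw [hgdef]
    have h8 := hcoer (f p.1) (h p)
    have h9 : Real.sqrt ((f p.1) ^ 2 + (h p) ^ 2) ^ 2 = (f p.1) ^ 2 + (h p) ^ 2 :=
      Real.sq_sqrt (by positivity)
    have h12 : (c * Real.sqrt ((f p.1) ^ 2 + (h p) ^ 2)) ^ 2 ≤ |G (f p.1) (h p)| ^ 2 :=
      pow_le_pow_left₀ (by positivity) h8 2
    have h13 : (c * Real.sqrt ((f p.1) ^ 2 + (h p) ^ 2)) ^ 2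
        = c ^ 2 * ((f p.1) ^ 2 + (h p) ^ 2) := by rw [mul_pow, h9]
    rw [h13, sq_abs] at h12
    exact h12
  have hint : c ^ 2 * (intSq (uCube n) f + intSq ((uCube n).prod (uCube m)) h)
      ≤ intSq ((uCube n).prod (uCube m)) g := by
    have h10 := integral_mono ((hfsq_c.add hhsq).const_mul (c ^ 2)) hgsq hpt
    simp only [Pi.add_apply] at h10
    rw [integral_const_mul, integral_add hfsq_c hhsq] at h10
    have h11 : (∫ p, (f p.1) ^ 2 ∂((uCube n).prod (uCube m)))
        = ∫ x, (f x) ^ 2 ∂(uCube n) :=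
      integral_comp_mp hMPfst hf.integrable_sq.aestronglyMeasurable
    rw [h11] at h10
    exact h10
  have hD : c ^ 2 * (var' (uCube n) f + var' ((uCube n).prod (uCube m)) h)
        - (mval ((uCube n).prod (uCube m)) g) ^ 2
      ≤ var' ((uCube n).prod (uCube m)) g := by
    have hm1 : (0:ℝ) ≤ (mval (uCube n) f) ^ 2 := sq_nonneg _
    have hm2 : (0:ℝ) ≤ (mval ((uCube n).prod (uCube m)) h) ^ 2 := sq_nonneg _
    have hc2 : (0:ℝ) ≤ c ^ 2 := sq_nonneg _
    unfold var'
    nlinarith [hint]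
  -- conclude
  unfold sobolT
  have hvfne : var' (uCube n) f ≠ 0 := ne_of_gt hvf
  have hrw : 2 * L ^ 2 * var' (uCube n) f * (tVar (uCube n) (updC i) f / var' (uCube n) f)
      = 2 * L ^ 2 * tVar (uCube n) (updC i) f := by
    field_simp
  rw [hrw]
  have hnum : tVar ((uCube n).prod (uCube m)) (updF i) g
      ≤ 2 * L ^ 2 * tVar (uCube n) (updC i) f := by nlinarith [htf0, sq_nonneg L]
  have hnum0 : (0:ℝ) ≤ 2 * L ^ 2 * tVar (uCube n) (updC i) f := by positivity
  exact div_le_div₀ hnum0 hnum hpos hD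

end SobolAux
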